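/- arXiv:2512.09083 — 3 statements merged into one kernel-verified Lean document; each statement's English description precedes it below -/
import Mathlib

section
/- Let 0 < μ < 1, R > 0, r > 0. If d < (1−μ)R + r, then the condition |d² + μ²R² − (R+r)²| ≤ 2μRd fails; hence no aspect angle ξ satisfies ρ(ξ) = d (the agent is in the no-escape region). -/
/-- In the no-escape region d < (1−μ)R + r, the arccos-argument condition
fails and no aspect angle puts the agent on the BEZ boundary. -/
theorem no_escape_region (μ R r d : ℝ)
    (hμ0 : 0 < μ) (hμ1 : μ < 1) (hR : 0 < R) (hr : 0 < r) (hd : 0 ≤ d)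
    (hne : d < (1 - μ) * R + r) :
    ¬ (|d ^ 2 + μ ^ 2 * R ^ 2 - (R + r) ^ 2| ≤ 2 * μ * R * d) ∧
    ∀ ξ : ℝ, μ * R * (Real.cos ξ +
      Real.sqrt (Real.cos ξ ^ 2 - 1 + (R + r) ^ 2 / (μ ^ 2 * R ^ 2))) ≠ d := by
  have hμR : 0 < μ * R := mul_pos hμ0 hR
  have hsum : d + μ * R < R + r := by nlinarith
  constructor
  · intro h
    have h1 : d ^ 2 + μ ^ 2 * R ^ 2 - (R + r) ^ 2 < -(2 * μ * R * d) := by nlinarith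
    have h2 := neg_abs_le (d ^ 2 + μ ^ 2 * R ^ 2 - (R + r) ^ 2)
    linarith
  · intro ξ
    set c := Real.cos ξ with hc
    have hc1 : c ≤ 1 := Real.cos_le_one ξ
    have hcm1 : -1 ≤ c := Real.neg_one_le_cos ξ
    set K : ℝ := (R + r) / (μ * R) with hK
    have hKdef : K * (μ * R) = R + r := div_mul_cancel₀ _ (ne_of_gt hμR)
    have hK1 : 1 < K := by
      rw [hK, lt_div_iff₀ hμR]
      nlinarith
    have hKsq : (R + r) ^ 2 / (μ ^ 2 * R ^ 2) = K ^ 2 := by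
      rw [hK, div_pow]; ring_nf
    have hs : K - 1 - c ≤ Real.sqrt (c ^ 2 - 1 + (R + r) ^ 2 / (μ ^ 2 * R ^ 2)) := by
      rcases le_or_gt (K - 1 - c) 0 with h | h
      · exact h.trans (Real.sqrt_nonneg _)
      · rw [hKsq]
        apply Real.le_sqrt' h |>.mpr
        nlinarith
    have : (1 - μ) * R + r ≤ μ * R * (c + Real.sqrt (c ^ 2 - 1 + (R + r) ^ 2 / (μ ^ 2 * R ^ 2))) := by
      have := mul_le_mul_of_nonneg_left (add_le_add_right hs c) (le_of_lt hμR)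
      calc (1 - μ) * R + r = μ * R * (c + (K - 1 - c)) := by
            rw [mul_add]
            have : μ * R * (K - 1 - c) = (R + r) - μ * R - μ * R * c := by
              rw [mul_sub, mul_sub, mul_comm (μ*R) K, hKdef]; ring
            rw [this]; ring
        _ ≤ _ := this
    intro heq
    rw [heq] at this
    linarith
end

section
/- For 0 < μ < 1, R > 0, r > 0, and d > sqrt((R+r)² + μ²R²) with the arccos argument in [−1,1], we have arccos((d² + μ²R² − (R+r)²)/(2μRd)) < arcsin((R+r)/d); i.e., above the critical distance the tangency condition is the more restrictive (larger) aspect angle. -/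
/-- Above the critical distance, the tangency aspect angle exceeds the
boundary aspect angle. -/
theorem boundary_lt_tangent_above_crit (μ R r d : ℝ)
    (hμ0 : 0 < μ) (hμ1 : μ < 1) (hR : 0 < R) (hr : 0 < r)
    (hd1 : R + r ≤ d) (hd2 : d > Real.sqrt ((R + r) ^ 2 + μ ^ 2 * R ^ 2))
    (harg : |(d ^ 2 + μ ^ 2 * R ^ 2 - (R + r) ^ 2) / (2 * μ * R * d)| ≤ 1) :
    Real.arccos ((d ^ 2 + μ ^ 2 * R ^ 2 - (R + r) ^ 2) / (2 * μ * R * d)) <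
      Real.arcsin ((R + r) / d) := by
  set s := R + r with hs
  have hs0 : 0 < s := by positivity
  have hd0 : 0 < d := lt_of_lt_of_le hs0 hd1
  have hy0 : 0 ≤ s / d := by positivity
  have hd2' : s ^ 2 + μ ^ 2 * R ^ 2 < d ^ 2 := by
    have h := Real.sq_sqrt (by positivity : (0:ℝ) ≤ s ^ 2 + μ ^ 2 * R ^ 2)
    nlinarith [hd2, Real.sqrt_nonneg (s ^ 2 + μ ^ 2 * R ^ 2)]
  have hds : 0 ≤ d ^ 2 - s ^ 2 := by nlinarith
  rw [Real.arcsin_eq_arccos hy0]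
  set t := Real.sqrt (d ^ 2 - s ^ 2) with ht
  have ht2 : t ^ 2 = d ^ 2 - s ^ 2 := Real.sq_sqrt hds
  have htμ : μ * R < t := by
    have : (μ * R) ^ 2 < t ^ 2 := by rw [ht2]; nlinarith
    nlinarith [Real.sqrt_nonneg (d ^ 2 - s ^ 2), mul_pos hμ0 hR]
  have hz : Real.sqrt (1 - (s / d) ^ 2) = t / d := by
    rw [show (1 - (s / d) ^ 2) = (d ^ 2 - s ^ 2) / d ^ 2 from by field_simp,
      Real.sqrt_div hds, Real.sqrt_sq hd0.le]
  rw [hz]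
  apply Real.strictAntiOn_arccos
  · constructor
    · have : (0:ℝ) ≤ t / d := by positivity
      linarith
    · rw [div_le_one hd0]
      calc t ≤ Real.sqrt (d ^ 2) := Real.sqrt_le_sqrt (by nlinarith)
        _ = d := Real.sqrt_sq hd0.le
  · exact ⟨neg_le_of_abs_le harg, le_of_abs_le harg⟩
  · rw [div_lt_div_iff₀ hd0 (by positivity : (0:ℝ) < 2 * μ * R * d)]
    nlinarith [sq_nonneg (t - μ * R)]
end

section
/- Let 0 < μ < 1, R > 0, r > 0 and suppose d satisfies |d² + μ²R² − (R+r)²| ≤ 2μRd, with ξ* = arccos((d² + μ²R² − (R+r)²)/(2μRd)). Then for any aspect angle ξ ∈ [0, π], d ≤ ρ(ξ) if and only if ξ ≤ ξ*. Hence the unsafe set of aspect angles {ξ ∈ [−π, π] : d ≤ ρ(|ξ|)} equals [−ξ*, ξ*]. -/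
/-- With ξ* = arccos of the law-of-cosines argument, the agent at distance d
is inside the BEZ at aspect angle ξ ∈ [0,π] iff ξ ≤ ξ*, and the unsafe set of aspect angles
in [−π, π] is exactly [−ξ*, ξ*]. -/
theorem unsafe_aspect_set_eq (μ R r d : ℝ)
    (hμ0 : 0 < μ) (hμ1 : μ < 1) (hR : 0 < R) (hr : 0 < r) (hd : 0 < d)
    (harg : |d ^ 2 + μ ^ 2 * R ^ 2 - (R + r) ^ 2| ≤ 2 * μ * R * d) :
    (∀ ξ ∈ Set.Icc (0 : ℝ) Real.pi,
      (d ≤ μ * R * (Real.cos ξ +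
          Real.sqrt (Real.cos ξ ^ 2 - 1 + (R + r) ^ 2 / (μ ^ 2 * R ^ 2)))) ↔
        ξ ≤ Real.arccos ((d ^ 2 + μ ^ 2 * R ^ 2 - (R + r) ^ 2) / (2 * μ * R * d))) ∧
    {ξ : ℝ | ξ ∈ Set.Icc (-Real.pi) Real.pi ∧
        d ≤ μ * R * (Real.cos |ξ| +
          Real.sqrt (Real.cos |ξ| ^ 2 - 1 + (R + r) ^ 2 / (μ ^ 2 * R ^ 2)))}
      = Set.Icc (-(Real.arccos ((d ^ 2 + μ ^ 2 * R ^ 2 - (R + r) ^ 2) / (2 * μ * R * d))))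
          (Real.arccos ((d ^ 2 + μ ^ 2 * R ^ 2 - (R + r) ^ 2) / (2 * μ * R * d))) := by
  set A : ℝ := (d ^ 2 + μ ^ 2 * R ^ 2 - (R + r) ^ 2) / (2 * μ * R * d) with hA
  have hden : (0:ℝ) < 2 * μ * R * d := by positivity
  have hA1 : |A| ≤ 1 := by
    rw [hA, abs_div, abs_of_pos hden, div_le_one hden]; exact harg
  have hKμ : μ ^ 2 * R ^ 2 < (R + r) ^ 2 := by
    nlinarith [mul_pos (show (0:ℝ) < R + r - μ * R by nlinarith) (show (0:ℝ) < R + r + μ * R by positivity)]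
  have hcA : Real.cos (Real.arccos A) = A :=
    Real.cos_arccos (abs_le.1 hA1).1 (abs_le.1 hA1).2
  have harcmem : Real.arccos A ∈ Set.Icc (0:ℝ) Real.pi :=
    ⟨Real.arccos_nonneg A, Real.arccos_le_pi A⟩
  have hsqrt : ∀ c : ℝ, μ * R * Real.sqrt (c ^ 2 - 1 + (R + r) ^ 2 / (μ ^ 2 * R ^ 2))
      = Real.sqrt ((μ * R) ^ 2 * c ^ 2 - (μ * R) ^ 2 + (R + r) ^ 2) := by
    intro c
    rw [show (μ * R) ^ 2 * c ^ 2 - (μ * R) ^ 2 + (R + r) ^ 2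
        = (μ * R) ^ 2 * (c ^ 2 - 1 + (R + r) ^ 2 / (μ ^ 2 * R ^ 2)) by
      field_simp]
    rw [Real.sqrt_mul (by positivity) _, Real.sqrt_sq (by positivity)]
  have key : ∀ c : ℝ,
      (d ≤ μ * R * (c + Real.sqrt (c ^ 2 - 1 + (R + r) ^ 2 / (μ ^ 2 * R ^ 2)))) ↔ A ≤ c := by
    intro c
    rw [mul_add, hsqrt c]
    constructor
    · intro h
      rw [hA, div_le_iff₀ hden]
      by_cases hc : d - μ * R * c ≤ 0
      · nlinarith [mul_nonneg (by linarith : (0:ℝ) ≤ μ * R * c - d) hd.le]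
      · push_neg at hc
        have h2 : d - μ * R * c ≤ Real.sqrt ((μ * R) ^ 2 * c ^ 2 - (μ * R) ^ 2 + (R + r) ^ 2) := by
          linarith
        have h3 : (d - μ * R * c) ^ 2 ≤ (μ * R) ^ 2 * c ^ 2 - (μ * R) ^ 2 + (R + r) ^ 2 := by
          have := Real.sq_sqrt (show (0:ℝ) ≤ (μ * R) ^ 2 * c ^ 2 - (μ * R) ^ 2 + (R + r) ^ 2 by
            nlinarith [sq_nonneg (μ * R * c)])
          nlinarith [pow_le_pow_left₀ hc.le h2 2]
        nlinarith
    · intro h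
      rw [hA, div_le_iff₀ hden] at h
      by_cases hc : d - μ * R * c ≤ 0
      · have := Real.sqrt_nonneg ((μ * R) ^ 2 * c ^ 2 - (μ * R) ^ 2 + (R + r) ^ 2)
        linarith
      · push_neg at hc
        have h3 : (d - μ * R * c) ^ 2 ≤ (μ * R) ^ 2 * c ^ 2 - (μ * R) ^ 2 + (R + r) ^ 2 := by
          nlinarith
        have h2 : d - μ * R * c ≤ Real.sqrt ((μ * R) ^ 2 * c ^ 2 - (μ * R) ^ 2 + (R + r) ^ 2) := by
          calc d - μ * R * c = Real.sqrt ((d - μ * R * c) ^ 2) := (Real.sqrt_sq hc.le).symm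
          _ ≤ _ := Real.sqrt_le_sqrt h3
        linarith
    -- done key
  have main : ∀ ξ ∈ Set.Icc (0 : ℝ) Real.pi,
      (d ≤ μ * R * (Real.cos ξ +
          Real.sqrt (Real.cos ξ ^ 2 - 1 + (R + r) ^ 2 / (μ ^ 2 * R ^ 2)))) ↔ ξ ≤ Real.arccos A := by
    intro ξ hξ
    rw [key (Real.cos ξ)]
    conv_lhs => rw [← hcA]
    exact Real.strictAntiOn_cos.le_iff_ge harcmem hξ
  refine ⟨main, ?_⟩
  ext ξ
  simp only [Set.mem_setOf_eq, Set.mem_Icc]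
  constructor
  · rintro ⟨hξπ, hcond⟩
    have habs : |ξ| ∈ Set.Icc (0:ℝ) Real.pi := ⟨abs_nonneg _, abs_le.2 hξπ⟩
    have := (main |ξ| habs).1 hcond
    exact abs_le.1 (neg_neg (Real.arccos A) ▸ this)
  · rintro ⟨h1, h2⟩
    have habsle : |ξ| ≤ Real.arccos A := abs_le.2 ⟨by linarith, h2⟩
    have habs : |ξ| ∈ Set.Icc (0:ℝ) Real.pi :=
      ⟨abs_nonneg _, le_trans habsle harcmem.2⟩
    refine ⟨⟨?_, ?_⟩, (main |ξ| habs).2 habsle⟩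
    · have := harcmem.2; linarith [abs_le.1 habsle]
    · linarith [abs_le.1 habsle, harcmem.2]
end
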